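/- In a k-path, no two spikes are adjacent, and every spike is adjacent to exactly the k vertices of one of the current cliques X_i of the construction. -/

import Mathlib

/-- The edge set of a complete graph on the vertex set `V`. -/
def cliqueEdges (V : Finset ℕ) : Finset (Sym2 ℕ) :=
  ((V ×ˢ V).filter (fun p => p.1 ≠ p.2)).image (fun p => s(p.1, p.2))

/-- `X` is a clique with respect to the edge set `E`. -/
def IsCliqueIn (E : Finset (Sym2 ℕ)) (X : Finset ℕ) : Prop :=
  ∀ x ∈ X, ∀ y ∈ X, x ≠ y → s(x, y) ∈ E

/-- Inductive definition of a `k`-tree with vertex set `V` and edge set `E`: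
a `k`-clique is a `k`-tree, and one may add a new vertex joined to all
vertices of an existing `k`-clique (the support). -/
inductive IsKTree (k : ℕ) : Finset ℕ → Finset (Sym2 ℕ) → Prop where
  | base (V : Finset ℕ) (h : V.card = k) : IsKTree k V (cliqueEdges V)
  | extend (V : Finset ℕ) (E : Finset (Sym2 ℕ)) (X : Finset ℕ) (v : ℕ)
      (ht : IsKTree k V E) (hXV : X ⊆ V) (hX : X.card = k)
      (hclique : IsCliqueIn E X) (hv : v ∉ V) :
      IsKTree k (insert v V) (E ∪ X.image (fun x => s(x, v)))

/-- Inductive definition of a `k`-path with vertex set `V`, edge set `E`, and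
list of current cliques `Xs` (most recent first): a new vertex is always
joined to the current clique (head of the list); afterwards the current
clique either stays the same (the new vertex is a spike) or is updated by
replacing one of its vertices with the new vertex. -/
inductive IsKPath (k : ℕ) : Finset ℕ → Finset (Sym2 ℕ) → List (Finset ℕ) → Prop where
  | base (V : Finset ℕ) (h : V.card = k) : IsKPath k V (cliqueEdges V) [V]
  | spike (V : Finset ℕ) (E : Finset (Sym2 ℕ)) (X : Finset ℕ) (Xs : List (Finset ℕ)) (v : ℕ)
      (ht : IsKPath k V E (X :: Xs)) (hv : v ∉ V) :
      IsKPath k (insert v V) (E ∪ X.image (fun x => s(x, v))) (X :: Xs)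
  | shift (V : Finset ℕ) (E : Finset (Sym2 ℕ)) (X : Finset ℕ) (Xs : List (Finset ℕ)) (v u : ℕ)
      (ht : IsKPath k V E (X :: Xs)) (hv : v ∉ V) (hu : u ∈ X) :
      IsKPath k (insert v V) (E ∪ X.image (fun x => s(x, v)))
        ((insert v (X.erase u)) :: X :: Xs)

/-- A spike of a `k`-path: a vertex not belonging to any current clique. -/
def IsSpike (V : Finset ℕ) (Xs : List (Finset ℕ)) (v : ℕ) : Prop :=
  v ∈ V ∧ ∀ X ∈ Xs, v ∉ X

lemma mem_cliqueEdges {V : Finset ℕ} {a b : ℕ} :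
    s(a, b) ∈ cliqueEdges V ↔ a ∈ V ∧ b ∈ V ∧ a ≠ b := by
  constructor
  · intro h
    simp only [cliqueEdges, Finset.mem_image, Finset.mem_filter, Finset.mem_product] at h
    obtain ⟨⟨x, y⟩, ⟨⟨hx, hy⟩, hne⟩, heq⟩ := h
    rw [Sym2.eq_iff] at heq
    rcases heq with ⟨rfl, rfl⟩ | ⟨rfl, rfl⟩
    · exact ⟨hx, hy, hne⟩
    · exact ⟨hy, hx, fun h => hne h.symm⟩
  · rintro ⟨ha, hb, hne⟩
    simp only [cliqueEdges, Finset.mem_image, Finset.mem_filter, Finset.mem_product]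
    exact ⟨(a, b), ⟨⟨ha, hb⟩, hne⟩, rfl⟩

lemma kpath_aux (k : ℕ) (V : Finset ℕ) (E : Finset (Sym2 ℕ))
    (Xs : List (Finset ℕ)) (h : IsKPath k V E Xs) :
    (∀ X ∈ Xs, X ⊆ V ∧ X.card = k) ∧
    (∀ a b : ℕ, s(a, b) ∈ E → a ∈ V ∧ b ∈ V) ∧
    (∀ u v : ℕ, IsSpike V Xs u → IsSpike V Xs v → u ≠ v → s(u, v) ∉ E) ∧
    (∀ v : ℕ, IsSpike V Xs v →
      ∃ X ∈ Xs, X.card = k ∧ ∀ u : ℕ, u ≠ v → (s(u, v) ∈ E ↔ u ∈ X)) := by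
  induction h with
  | base V h =>
    refine ⟨?_, ?_, ?_, ?_⟩
    · rintro X hX
      simp only [List.mem_singleton] at hX
      subst hX; exact ⟨le_refl _, h⟩
    · intro a b hab
      rcases mem_cliqueEdges.mp hab with ⟨ha, hb, _⟩
      exact ⟨ha, hb⟩
    · rintro u v ⟨hu, hu2⟩ _ _ _
      exact absurd hu (hu2 V (List.mem_singleton.mpr rfl))
    · rintro v ⟨hv, hv2⟩
      exact absurd hv (hv2 V (List.mem_singleton.mpr rfl))
  | spike V E X Xs v ht hv ih =>
    obtain ⟨ih1, ih2, ih3, ih4⟩ := ih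
    have hXV : X ⊆ V := (ih1 X (List.mem_cons_self)).1
    have hXk : X.card = k := (ih1 X (List.mem_cons_self)).2
    -- new edges touching w ∈ V with w ∉ X are impossible
    have himg : ∀ a w : ℕ, w ∈ V → w ∉ X →
        s(a, w) ∉ X.image (fun x => s(x, v)) := by
      intro a w hwV hwX hmem
      simp only [Finset.mem_image] at hmem
      obtain ⟨x, hx, heq⟩ := hmem
      rw [Sym2.eq_iff] at heq
      rcases heq with ⟨rfl, rfl⟩ | ⟨rfl, rfl⟩
      · exact hv hwV
      · exact hwX hx
    -- old spikes remain spikes and vice versa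
    have hspike : ∀ w : ℕ, IsSpike (insert v V) (X :: Xs) w ↔
        w = v ∨ IsSpike V (X :: Xs) w := by
      intro w
      constructor
      · rintro ⟨hw, hw2⟩
        rcases Finset.mem_insert.mp hw with h1 | h1
        · exact Or.inl h1
        · exact Or.inr ⟨h1, hw2⟩
      · rintro (rfl | ⟨hw, hw2⟩)
        · refine ⟨Finset.mem_insert_self _ _, ?_⟩
          intro Y hY hwY
          exact hv ((ih1 Y hY).1 hwY)
        · exact ⟨Finset.mem_insert_of_mem hw, hw2⟩
    refine ⟨?_, ?_, ?_, ?_⟩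
    · intro Y hY
      exact ⟨(ih1 Y hY).1.trans (Finset.subset_insert _ _), (ih1 Y hY).2⟩
    · intro a b hab
      rcases Finset.mem_union.mp hab with h1 | h1
      · exact ⟨Finset.mem_insert_of_mem (ih2 a b h1).1,
          Finset.mem_insert_of_mem (ih2 a b h1).2⟩
      · simp only [Finset.mem_image] at h1
        obtain ⟨x, hx, heq⟩ := h1
        rw [Sym2.eq_iff] at heq
        rcases heq with ⟨rfl, rfl⟩ | ⟨rfl, rfl⟩
        · exact ⟨Finset.mem_insert_of_mem (hXV hx), Finset.mem_insert_self _ _⟩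
        · exact ⟨Finset.mem_insert_self _ _, Finset.mem_insert_of_mem (hXV hx)⟩
    · intro p q hp hq hpq hmem
      rcases Finset.mem_union.mp hmem with h1 | h1
      · rcases (hspike p).mp hp with rfl | hp'
        · exact hv (ih2 p q h1).1
        · rcases (hspike q).mp hq with rfl | hq'
          · exact hv (ih2 p q h1).2
          · exact ih3 p q hp' hq' hpq h1
      · simp only [Finset.mem_image] at h1
        obtain ⟨x, hx, heq⟩ := h1
        rw [Sym2.eq_iff] at heq
        rcases heq with ⟨h1, h2⟩ | ⟨h1, h2⟩
        · rcases (hspike p).mp hp with h3 | hp'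
          · exact hpq (h3.trans h2)
          · exact hp'.2 X (List.mem_cons_self) (h1 ▸ hx)
        · rcases (hspike q).mp hq with h3 | hq'
          · exact hpq (h2.symm.trans h3.symm)
          · exact hq'.2 X (List.mem_cons_self) (h1 ▸ hx)
    · intro w hw
      rcases (hspike w).mp hw with rfl | hw'
      · refine ⟨X, List.mem_cons_self, hXk, ?_⟩
        intro a haw
        constructor
        · intro hmem
          rcases Finset.mem_union.mp hmem with h1 | h1
          · exact absurd (ih2 a w h1).2 hv
          · simp only [Finset.mem_image] at h1
            obtain ⟨x, hx, heq⟩ := h1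
            rw [Sym2.eq_iff] at heq
            rcases heq with ⟨h1, h2⟩ | ⟨h1, h2⟩
            · exact h1 ▸ hx
            · exact absurd h2.symm haw
        · intro haX
          exact Finset.mem_union_right _ (Finset.mem_image.mpr ⟨a, haX, rfl⟩)
      · obtain ⟨Y, hY, hYk, hYiff⟩ := ih4 w hw'
        refine ⟨Y, hY, hYk, ?_⟩
        intro a haw
        constructor
        · intro hmem
          rcases Finset.mem_union.mp hmem with h1 | h1
          · exact (hYiff a haw).mp h1
          · exact absurd h1 (himg a w hw'.1 (hw'.2 X (List.mem_cons_self)))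
        · intro haY
          exact Finset.mem_union_left _ ((hYiff a haw).mpr haY)
  | shift V E X Xs v u ht hv hu ih =>
    obtain ⟨ih1, ih2, ih3, ih4⟩ := ih
    have hXV : X ⊆ V := (ih1 X (List.mem_cons_self)).1
    have hXk : X.card = k := (ih1 X (List.mem_cons_self)).2
    have hveX : v ∉ X.erase u := fun h => hv (hXV (Finset.mem_of_mem_erase h))
    have hYk : (insert v (X.erase u)).card = k := by
      rw [Finset.card_insert_of_notMem hveX, Finset.card_erase_of_mem hu, hXk]
      have : 0 < k := hXk ▸ Finset.card_pos.mpr ⟨u, hu⟩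
      omega
    have hspike : ∀ w : ℕ,
        IsSpike (insert v V) (insert v (X.erase u) :: X :: Xs) w ↔
        IsSpike V (X :: Xs) w := by
      intro w
      constructor
      · rintro ⟨hw, hw2⟩
        have hwY := hw2 _ (List.mem_cons_self)
        have hwv : w ≠ v := fun h => hwY (h ▸ Finset.mem_insert_self _ _)
        rcases Finset.mem_insert.mp hw with h1 | h1
        · exact absurd h1 hwv
        · exact ⟨h1, fun Y hY => hw2 Y (List.mem_cons_of_mem _ hY)⟩
      · rintro ⟨hw, hw2⟩
        refine ⟨Finset.mem_insert_of_mem hw, ?_⟩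
        intro Y hY
        rcases List.mem_cons.mp hY with rfl | hY'
        · intro hwY
          rcases Finset.mem_insert.mp hwY with rfl | h1
          · exact hv hw
          · exact hw2 X (List.mem_cons_self) (Finset.mem_of_mem_erase h1)
        · exact hw2 Y hY'
    have himg : ∀ a w : ℕ, w ∈ V → w ∉ X →
        s(a, w) ∉ X.image (fun x => s(x, v)) := by
      intro a w hwV hwX hmem
      simp only [Finset.mem_image] at hmem
      obtain ⟨x, hx, heq⟩ := hmem
      rw [Sym2.eq_iff] at heq
      rcases heq with ⟨rfl, rfl⟩ | ⟨rfl, rfl⟩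
      · exact hv hwV
      · exact hwX hx
    refine ⟨?_, ?_, ?_, ?_⟩
    · intro Y hY
      rcases List.mem_cons.mp hY with rfl | hY'
      · refine ⟨?_, hYk⟩
        intro x hx
        rcases Finset.mem_insert.mp hx with rfl | h1
        · exact Finset.mem_insert_self _ _
        · exact Finset.mem_insert_of_mem (hXV (Finset.mem_of_mem_erase h1))
      · exact ⟨(ih1 Y hY').1.trans (Finset.subset_insert _ _), (ih1 Y hY').2⟩
    · intro a b hab
      rcases Finset.mem_union.mp hab with h1 | h1
      · exact ⟨Finset.mem_insert_of_mem (ih2 a b h1).1,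
          Finset.mem_insert_of_mem (ih2 a b h1).2⟩
      · simp only [Finset.mem_image] at h1
        obtain ⟨x, hx, heq⟩ := h1
        rw [Sym2.eq_iff] at heq
        rcases heq with ⟨rfl, rfl⟩ | ⟨rfl, rfl⟩
        · exact ⟨Finset.mem_insert_of_mem (hXV hx), Finset.mem_insert_self _ _⟩
        · exact ⟨Finset.mem_insert_self _ _, Finset.mem_insert_of_mem (hXV hx)⟩
    · intro p q hp hq hpq hmem
      have hp' := (hspike p).mp hp
      have hq' := (hspike q).mp hq
      rcases Finset.mem_union.mp hmem with h1 | h1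
      · exact ih3 p q hp' hq' hpq h1
      · exact himg p q hq'.1 (hq'.2 X (List.mem_cons_self)) h1
    · intro w hw
      have hw' := (hspike w).mp hw
      obtain ⟨Y, hY, hYk', hYiff⟩ := ih4 w hw'
      refine ⟨Y, List.mem_cons_of_mem _ hY, hYk', ?_⟩
      intro a haw
      constructor
      · intro hmem
        rcases Finset.mem_union.mp hmem with h1 | h1
        · exact (hYiff a haw).mp h1
        · exact absurd h1 (himg a w hw'.1 (hw'.2 X (List.mem_cons_self)))
      · intro haY
        exact Finset.mem_union_left _ ((hYiff a haw).mpr haY)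

/-- In a `k`-path, no two spikes are adjacent, and every spike is adjacent to
exactly the `k` vertices of one of the current cliques. -/
theorem kpath_spikes (k : ℕ) (V : Finset ℕ) (E : Finset (Sym2 ℕ))
    (Xs : List (Finset ℕ)) (h : IsKPath k V E Xs) :
    (∀ u v : ℕ, IsSpike V Xs u → IsSpike V Xs v → u ≠ v → s(u, v) ∉ E) ∧
    (∀ v : ℕ, IsSpike V Xs v →
      ∃ X ∈ Xs, X.card = k ∧ ∀ u : ℕ, u ≠ v → (s(u, v) ∈ E ↔ u ∈ X)) := by
  obtain ⟨_, _, h3, h4⟩ := kpath_aux k V E Xs h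
  exact ⟨h3, h4⟩
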